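/- In a quadratic Hom-Novikov superalgebra (A, μ, α, B) with α an automorphism, for all homogeneous x, y, z ∈ A: α(z)·[x,y] = 0, where [x,y] = xy − (−1)^{|x||y|}yx; that is, left multiplication by any element annihilates all super-commutators. -/

import Mathlib

/-- The sub-adjacent super-commutator bracket `[x,y] = xy - (-1)^(|x||y|) yx`
for homogeneous `x` of degree `i` and `y` of degree `j`. -/
def sbr {𝕜 A : Type*} [Field 𝕜] [AddCommGroup A] [Module 𝕜 A]
    (mul : A →ₗ[𝕜] A →ₗ[𝕜] A) (i j : ZMod 2) (x y : A) : A :=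
  mul x y - ((-1 : 𝕜) ^ (i.val * j.val)) • mul y x

theorem stmt19
    (𝕜 A : Type*) [Field 𝕜] [AddCommGroup A] [Module 𝕜 A]
    (G : ZMod 2 → Submodule 𝕜 A) (hG : DirectSum.IsInternal G)
    (mul : A →ₗ[𝕜] A →ₗ[𝕜] A) (α : A →ₗ[𝕜] A)
    (hmul_even : ∀ i j : ZMod 2, ∀ x ∈ G i, ∀ y ∈ G j, mul x y ∈ G (i + j))
    (hα_even : ∀ i : ZMod 2, ∀ x ∈ G i, α x ∈ G i)
    (hα_mul : ∀ x y : A, α (mul x y) = mul (α x) (α y))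
    (hls : ∀ i j k : ZMod 2, ∀ x ∈ G i, ∀ y ∈ G j, ∀ z ∈ G k,
      mul (mul x y) (α z) - mul (α x) (mul y z)
        = ((-1 : 𝕜) ^ (i.val * j.val)) • (mul (mul y x) (α z) - mul (α y) (mul x z)))
    (hrn : ∀ i j k : ZMod 2, ∀ x ∈ G i, ∀ y ∈ G j, ∀ z ∈ G k,
      mul (mul x y) (α z) = ((-1 : 𝕜) ^ (j.val * k.val)) • mul (mul x z) (α y))
    (B : A →ₗ[𝕜] A →ₗ[𝕜] 𝕜)
    (hB_even : ∀ i j : ZMod 2, i ≠ j → ∀ x ∈ G i, ∀ y ∈ G j, B x y = 0)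
    (hB_sym : ∀ i j : ZMod 2, ∀ x ∈ G i, ∀ y ∈ G j,
      B x y = ((-1 : 𝕜) ^ (i.val * j.val)) * B y x)
    (hB_nd : ∀ x : A, (∀ y : A, B x y = 0) → x = 0)
    (hB_inv : ∀ x y z : A, B (α x) (mul y z) = B (mul x y) (α z))
    (hα_bij : Function.Bijective α) :
    ∀ i j k : ZMod 2, ∀ x ∈ G i, ∀ y ∈ G j, ∀ z ∈ G k,
      mul (α z) (sbr mul i j x y) = 0 := by
  intro i j k x hx y hy z hz
  set c : 𝕜 := ((-1 : 𝕜) ^ (i.val * j.val)) with hc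
  set L : A := mul (α z) (sbr mul i j x y) with hL
  have key : ∀ l : ZMod 2, ∀ u ∈ G l, B L (α (α u)) = 0 := by
    intro l u hu
    have h1 : B L (α (α u)) = B (α (α z)) (mul (sbr mul i j x y) (α u)) :=
      (hB_inv (α z) (sbr mul i j x y) (α u)).symm
    have h2 : mul (sbr mul i j x y) (α u)
        = mul (α x) (mul y u) - c • mul (α y) (mul x u) := by
      have hls' := hls i j l x hx y hy u hu
      rw [smul_sub] at hls'
      have hA : mul (mul x y) (α u)
          = mul (α x) (mul y u) + (c • mul (mul y x) (α u)
            - c • mul (α y) (mul x u)) := by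
        rw [← hls']; abel
      simp only [sbr, LinearMap.map_sub, LinearMap.sub_apply, LinearMap.map_smul,
        LinearMap.smul_apply, hA]
      abel
    -- T(a,b,c',d) := B (α (mul a b)) (α (mul c' d))
    have h4 : (B (α (α z))) (mul (α x) (mul y u)) = B (α (mul z x)) (α (mul y u)) := by
      rw [hB_inv (α z) (α x) (mul y u), ← hα_mul]
    have h6 : (B (α (α z))) (mul (α y) (mul x u)) = B (α (mul z y)) (α (mul x u)) := by
      rw [hB_inv (α z) (α y) (mul x u), ← hα_mul]
    have h5 : B (α (mul z x)) (α (mul y u)) = c * B (α (mul z y)) (α (mul x u)) := by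
      have e1 : B (α (mul z x)) (α (mul y u))
          = B (mul (mul z x) (α y)) (α (α u)) := by
        rw [hα_mul y u, hB_inv (mul z x) (α y) (α u)]
      have e2 : B (α (mul z y)) (α (mul x u))
          = B (mul (mul z y) (α x)) (α (α u)) := by
        rw [hα_mul x u, hB_inv (mul z y) (α x) (α u)]
      have hrn' := hrn k i j z hz x hx y hy
      rw [e1, e2, hrn', ← hc, LinearMap.map_smul, LinearMap.smul_apply, smul_eq_mul]
    rw [h1, h2, map_sub, map_smul, h4, h6, h5, smul_eq_mul]
    ring
  have hall : ∀ u : A, B L (α (α u)) = 0 := by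
    intro u
    have hu : u ∈ ⨆ l, G l := by
      rw [hG.submodule_iSup_eq_top]; exact Submodule.mem_top
    refine Submodule.iSup_induction (motive := fun u => B L (α (α u)) = 0) G hu key ?_ ?_
    · simp
    · intro a b ha hb
      rw [map_add, map_add, map_add, ha, hb, add_zero]
  have hzero : ∀ v : A, B L v = 0 := by
    intro v
    obtain ⟨w, hw⟩ := hα_bij.2 v
    obtain ⟨u, hu⟩ := hα_bij.2 w
    rw [← hw, ← hu]
    exact hall u
  exact hB_nd L hzero
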